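/- arXiv:2205.03816 — 3 statements merged into one kernel-verified Lean document; each statement's English description precedes it below -/
import Mathlib

section
/- For every 0 < α < 2, the measure ν_α satisfies the Lévy measure integrability condition: ∫_ℝ min(x², 1) / ((1+|x|)·log^{1+α}(1+|x|)) dx < ∞. -/
open MeasureTheory Set Filter Topology

/-- For every `0 < α < 2`, the Lévy measure `ν_α` with density
`x ↦ 1/((1+|x|)·log^{1+α}(1+|x|))` satisfies the Lévy integrability condition
`∫ min(x², 1) dν_α < ∞`. -/
theorem levy_integrability_condition (α : ℝ) (hα0 : 0 < α) (hα2 : α < 2) :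
    ∫⁻ x : ℝ, ENNReal.ofReal
      (min (x ^ 2) 1 / ((1 + |x|) * Real.log (1 + |x|) ^ (1 + α))) < ⊤ := by
  set F : ℝ → ℝ := fun x => min (x ^ 2) 1 / ((1 + |x|) * Real.log (1 + |x|) ^ (1 + α)) with hF
  have hFmeas : Measurable F := by
    apply Measurable.div
    · exact (measurable_id.pow_const 2).min measurable_const
    · exact ((measurable_const.add measurable_abs).mul
        (((measurable_const.add measurable_abs).log).pow_const _))
  have hFnonneg : ∀ x, 0 ≤ F x := by
    intro x
    apply div_nonneg
    · exact le_min (sq_nonneg x) zero_le_one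
    · apply mul_nonneg (by positivity)
      exact Real.rpow_nonneg (Real.log_nonneg (by linarith [abs_nonneg x])) _
  have hFeven : ∀ x, F (-x) = F x := by
    intro x; simp [hF, neg_pow]
  have hlog : ∀ t : ℝ, 0 ≤ t → t ≤ 1 → t / 2 ≤ Real.log (1 + t) := by
    intro t ht ht1
    have h1 : (0:ℝ) < 1 + t := by linarith
    have h2 := Real.log_le_sub_one_of_pos (x := (1+t)⁻¹) (by positivity)
    rw [Real.log_inv] at h2
    have h3 : t / (1 + t) ≤ Real.log (1 + t) := by
      have h4 : (1+t)⁻¹ - 1 = -(t / (1+t)) := by field_simp; ring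
      rw [h4] at h2; linarith
    refine le_trans ?_ h3
    rw [div_le_div_iff₀ (by norm_num) h1]
    nlinarith
  -- integrable on middle
  have hmid : IntegrableOn F (Ioc (-1 : ℝ) 1) := by
    have hrpow : IntegrableOn (fun x : ℝ => |x| ^ (1 - α)) (Ioc (-1 : ℝ) 1) := by
      have h1 : IntegrableOn (fun x : ℝ => x ^ (1 - α)) (Ioc (0:ℝ) 1) :=
        (intervalIntegral.intervalIntegrable_rpow' (by linarith)).1
      have h2 : IntegrableOn (fun x : ℝ => (-x) ^ (1 - α)) (Ioc (-1:ℝ) 0) := by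
        have := (IntervalIntegrable.iff_comp_neg
          (f := fun x : ℝ => x ^ (1 - α)) (a := 0) (b := 1)).1
          (intervalIntegral.intervalIntegrable_rpow' (by linarith))
        simpa using this.2
      have hu : Ioc (-1 : ℝ) 1 = Ioc (-1:ℝ) 0 ∪ Ioc 0 1 :=
        (Ioc_union_Ioc_eq_Ioc (by norm_num) (by norm_num)).symm
      rw [hu]
      apply IntegrableOn.union
      · exact h2.congr_fun (fun x hx => by rw [abs_of_nonpos hx.2]) measurableSet_Ioc
      · exact h1.congr_fun (fun x hx => by rw [abs_of_pos hx.1]) measurableSet_Ioc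
    refine Integrable.mono' (hrpow.const_mul (2 ^ (1 + α)))
      (hFmeas.aestronglyMeasurable.restrict) ?_
    filter_upwards [ae_restrict_mem measurableSet_Ioc] with x hx
    rw [Real.norm_of_nonneg (hFnonneg x)]
    rcases eq_or_ne x 0 with rfl | hx0
    · have : F 0 = 0 := by simp [hF]
      rw [this]
      positivity
    have habs : 0 < |x| := abs_pos.2 hx0
    have habs1 : |x| ≤ 1 := abs_le.2 ⟨hx.1.le, hx.2⟩
    have hlx : |x| / 2 ≤ Real.log (1 + |x|) := hlog _ (abs_nonneg x) habs1
    have hd2 : (|x| / 2) ^ (1 + α) ≤ (1 + |x|) * Real.log (1 + |x|) ^ (1 + α) := by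
      calc (|x| / 2) ^ (1 + α) ≤ Real.log (1 + |x|) ^ (1 + α) :=
            Real.rpow_le_rpow (by positivity) hlx (by linarith)
        _ ≤ (1 + |x|) * Real.log (1 + |x|) ^ (1 + α) := by
            nlinarith [Real.rpow_nonneg
              (Real.log_nonneg (by linarith [abs_nonneg x] : (1:ℝ) ≤ 1 + |x|)) (1 + α),
              abs_nonneg x]
    have hdpos : (0:ℝ) < (|x| / 2) ^ (1 + α) := Real.rpow_pos_of_pos (by positivity) _
    have step1 : F x ≤ x ^ 2 / (|x| / 2) ^ (1 + α) :=
      div_le_div₀ (sq_nonneg x) (min_le_left _ _) hdpos hd2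
    refine step1.trans (le_of_eq ?_)
    have hx2 : x ^ 2 = |x| ^ (2:ℝ) := by
      rw [show ((2:ℝ)) = ((2:ℕ):ℝ) by norm_num, Real.rpow_natCast, sq_abs]
    calc x ^ 2 / (|x| / 2) ^ (1 + α)
        = |x| ^ (2:ℝ) / (|x| ^ (1 + α) / 2 ^ (1 + α)) := by
          rw [hx2, Real.div_rpow (abs_nonneg x) (by norm_num)]
      _ = 2 ^ (1 + α) * (|x| ^ (2:ℝ) / |x| ^ (1 + α)) := by
          rw [div_div_eq_mul_div]; ring
      _ = 2 ^ (1 + α) * |x| ^ (1 - α) := by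
          rw [← Real.rpow_sub habs, show (2:ℝ) - (1 + α) = 1 - α by ring]
  -- integrable on Ioi 1
  have htail : IntegrableOn F (Ioi (1:ℝ)) := by
    set g : ℝ → ℝ := fun x => -(α⁻¹ * Real.log (1 + x) ^ (-α)) with hg
    set G : ℝ → ℝ := fun x => 1 / ((1 + x) * Real.log (1 + x) ^ (1 + α)) with hG
    have hGint : IntegrableOn G (Ioi (1:ℝ)) := by
      have hderiv : ∀ x ∈ Ici (1:ℝ), HasDerivAt g (G x) x := by
        intro x hx
        have hx1 : (1:ℝ) ≤ x := hx
        have h1x : (0:ℝ) < 1 + x := by linarith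
        have hlogpos : 0 < Real.log (1 + x) := Real.log_pos (by linarith)
        have hd1 : HasDerivAt (fun y : ℝ => Real.log (1 + y)) (1 / (1 + x)) x := by
          have h0 : HasDerivAt (fun y : ℝ => 1 + y) 1 x := (hasDerivAt_id x).const_add 1
          simpa [one_div, Function.comp_def] using (Real.hasDerivAt_log h1x.ne').comp x h0
        have hd2 : HasDerivAt (fun y : ℝ => Real.log (1 + y) ^ (-α))
            ((-α) * Real.log (1 + x) ^ (-α - 1) * (1 / (1 + x))) x :=
          by have h := (Real.hasDerivAt_rpow_const (p := -α) (Or.inl hlogpos.ne')).comp x hd1; exact h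
        have hfin := (hd2.const_mul α⁻¹).neg
        convert hfin using 1
        · rfl
        · rfl
        · rfl
        have hL : Real.log (1+x) ^ (-α - 1) = (Real.log (1+x) ^ (1+α))⁻¹ := by
          rw [show -α - 1 = -(1+α) by ring, Real.rpow_neg hlogpos.le]
        have hLpos : 0 < Real.log (1+x) ^ (1+α) := Real.rpow_pos_of_pos hlogpos _
        rw [hG, hL]
        field_simp
      have hpos : ∀ x ∈ Ioi (1:ℝ), 0 ≤ G x := by
        intro x hx
        have hx1 : (1:ℝ) < x := hx
        have h1x : (0:ℝ) < 1 + x := by linarith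
        have hlogpos : 0 < Real.log (1 + x) := Real.log_pos (by linarith)
        have := Real.rpow_pos_of_pos hlogpos (1+α)
        positivity
      have hlim : Tendsto g atTop (𝓝 (-(α⁻¹ * 0))) := by
        apply Tendsto.neg
        apply Tendsto.const_mul
        exact (tendsto_rpow_neg_atTop hα0).comp
          (Real.tendsto_log_atTop.comp (tendsto_atTop_add_const_left _ 1 tendsto_id))
      exact integrableOn_Ioi_deriv_of_nonneg' hderiv hpos hlim
    refine Integrable.mono' hGint (hFmeas.aestronglyMeasurable.restrict) ?_
    filter_upwards [ae_restrict_mem measurableSet_Ioi] with x hx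
    rw [Real.norm_of_nonneg (hFnonneg x)]
    have hx1 : (1:ℝ) < x := hx
    have habs : |x| = x := abs_of_pos (by linarith)
    have hlogpos : 0 < Real.log (1 + x) := Real.log_pos (by linarith)
    have hLpos : 0 < Real.log (1+x) ^ (1+α) := Real.rpow_pos_of_pos hlogpos _
    have hdpos : (0:ℝ) < (1 + x) * Real.log (1 + x) ^ (1 + α) := by positivity
    rw [hF, hG]
    simp only [habs]
    exact div_le_div₀ zero_le_one (min_le_right _ _) hdpos le_rfl
  -- integrable on Iio (-1)
  have hneg : IntegrableOn F (Iio (-1:ℝ)) := by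
    have h_map_neg : ((volume : Measure ℝ).restrict (Ioi 1)).map Neg.neg
        = (volume : Measure ℝ).restrict (Iio (-1)) := by
      conv => rhs; rw [← Measure.map_neg_eq_self (volume : Measure ℝ),
        measurableEmbedding_neg.restrict_map]
      congr 1
      ext x
      simp
    rw [IntegrableOn, ← h_map_neg, measurableEmbedding_neg.integrable_map_iff]
    have hcomp : F ∘ Neg.neg = F := funext hFeven
    rw [hcomp]
    exact htail
  have hint : Integrable F := by
    rw [← integrableOn_univ]
    have hmid' : IntegrableOn F (Icc (-1:ℝ) 1) := by
      rw [integrableOn_Icc_iff_integrableOn_Ioc]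
      exact hmid
    have hcover : (univ : Set ℝ) ⊆ Iio (-1) ∪ (Icc (-1) 1 ∪ Ioi 1) := by
      intro x _
      rcases lt_or_ge x (-1) with h | h
      · exact Or.inl h
      rcases le_or_gt x 1 with h2 | h2
      · exact Or.inr (Or.inl ⟨h, h2⟩)
      · exact Or.inr (Or.inr h2)
    exact (hneg.union (hmid'.union htail)).mono_set hcover
  exact hint.lintegral_lt_top
end

section
/- For every 0 < α < 2, define the Pruitt index function h̄(r) = ν'_α({x : |x| > r}) + r^{-2}·∫_{|x| ≤ r} x² dν'_α(x) + r^{-1}·|∫_{1 < |x| ≤ r} x dν'_α(x)| for r ≥ 1. Then h̄(r) ≥ 2/(α·log^α(1+r)) for all r ≥ 1. -/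
open MeasureTheory

/-- The Lévy measure `ν_α` of the `K_α` process: density
`x ↦ 1/((1+|x|)·log^{1+α}(1+|x|))` with respect to Lebesgue measure. -/
noncomputable def nuAlpha (α : ℝ) : Measure ℝ :=
  volume.withDensity fun x =>
    ENNReal.ofReal (1 / ((1 + |x|) * Real.log (1 + |x|) ^ (1 + α)))

/-- The large-jump part `ν'_α`: restriction of `ν_α` to `{x : |x| > 1}`. -/
noncomputable def nuAlpha' (α : ℝ) : Measure ℝ :=
  (nuAlpha α).restrict {x : ℝ | 1 < |x|}

/-- The Pruitt index function
`h̄(r) = ν'_α({|x| > r}) + r⁻²·∫_{|x| ≤ r} x² dν'_α + r⁻¹·|∫_{1 < |x| ≤ r} x dν'_α|`. -/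
noncomputable def hbar (α r : ℝ) : ℝ :=
  (nuAlpha' α {x : ℝ | r < |x|}).toReal
    + (r ^ 2)⁻¹ * ∫ x in {x : ℝ | |x| ≤ r}, x ^ 2 ∂(nuAlpha' α)
    + r⁻¹ * |∫ x in {x : ℝ | 1 < |x| ∧ |x| ≤ r}, x ∂(nuAlpha' α)|

open Set Filter in
private lemma derivAux (α : ℝ) (hα : 0 < α) {x : ℝ} (hx : 0 < x) :
    HasDerivAt (fun y : ℝ => -(α⁻¹) * Real.log (1 + y) ^ (-α))
      (1 / ((1 + x) * Real.log (1 + x) ^ (1 + α))) x := by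
  have h1x : (0:ℝ) < 1 + x := by linarith
  have hlog : 0 < Real.log (1 + x) := Real.log_pos (by linarith)
  have h1 : HasDerivAt (fun y : ℝ => Real.log (1 + y)) (1 / (1 + x)) x := by
    have := ((hasDerivAt_id x).const_add 1).log (ne_of_gt h1x)
    simpa using this
  have h2 := (h1.rpow_const (p := -α) (Or.inl (ne_of_gt hlog))).const_mul (-(α⁻¹))
  refine h2.congr_deriv ?_
  have hre : Real.log (1 + x) ^ (-α - 1) = (Real.log (1 + x) ^ (1 + α))⁻¹ := by
    rw [show (-α - 1 : ℝ) = -(1 + α) by ring, Real.rpow_neg hlog.le]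
  rw [hre]
  have hα' : α ≠ 0 := ne_of_gt hα
  have hL : Real.log (1 + x) ^ (1 + α) ≠ 0 := (Real.rpow_pos_of_pos hlog _).ne'
  field_simp

open Set Filter in
private lemma tailIntegral (α r : ℝ) (hα : 0 < α) (hr : 1 ≤ r) :
    IntegrableOn (fun x => 1 / ((1 + x) * Real.log (1 + x) ^ (1 + α))) (Ioi r) ∧
      ∫ x in Ioi r, 1 / ((1 + x) * Real.log (1 + x) ^ (1 + α)) =
        1 / (α * Real.log (1 + r) ^ α) := by
  have hr0 : (0:ℝ) < r := lt_of_lt_of_le one_pos hr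
  have hderiv : ∀ x ∈ Ioi r, HasDerivAt (fun y : ℝ => -(α⁻¹) * Real.log (1 + y) ^ (-α))
      (1 / ((1 + x) * Real.log (1 + x) ^ (1 + α))) x :=
    fun x hx => derivAux α hα (hr0.trans hx)
  have hnonneg : ∀ x ∈ Ioi r, 0 ≤ 1 / ((1 + x) * Real.log (1 + x) ^ (1 + α)) := by
    intro x hx
    have hx0 : (0:ℝ) < x := hr0.trans hx
    have hlog : 0 < Real.log (1 + x) := Real.log_pos (by linarith)
    positivity
  have hcont : ContinuousWithinAt (fun y : ℝ => -(α⁻¹) * Real.log (1 + y) ^ (-α)) (Ici r) r :=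
    (derivAux α hα hr0).continuousAt.continuousWithinAt
  have hlt : Tendsto (fun y : ℝ => Real.log (1 + y)) atTop atTop :=
    Real.tendsto_log_atTop.comp (tendsto_atTop_add_const_left atTop 1 tendsto_id)
  have htend : Tendsto (fun y : ℝ => -(α⁻¹) * Real.log (1 + y) ^ (-α)) atTop (nhds 0) := by
    have := ((tendsto_rpow_neg_atTop hα).comp hlt).const_mul (-(α⁻¹))
    simpa using this
  refine ⟨integrableOn_Ioi_deriv_of_nonneg hcont hderiv hnonneg htend, ?_⟩
  rw [integral_Ioi_of_hasDerivAt_of_nonneg hcont hderiv hnonneg htend]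
  have hlogr : 0 < Real.log (1 + r) := Real.log_pos (by linarith)
  rw [Real.rpow_neg hlogr.le]
  have hα' : α ≠ 0 := ne_of_gt hα
  have hL : Real.log (1 + r) ^ α ≠ 0 := (Real.rpow_pos_of_pos hlogr _).ne'
  field_simp
  ring

open Set Filter in
private lemma tailMeasure (α r : ℝ) (hα : 0 < α) (hr : 1 ≤ r) :
    (nuAlpha' α {x : ℝ | r < |x|}).toReal = 2 / (α * Real.log (1 + r) ^ α) := by
  have hs : MeasurableSet {x : ℝ | r < |x|} :=
    measurableSet_lt measurable_const measurable_abs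
  have hsub : {x : ℝ | r < |x|} ⊆ {x : ℝ | 1 < |x|} :=
    fun x hx => lt_of_le_of_lt hr hx
  have hsplit : {x : ℝ | r < |x|} = Iio (-r) ∪ Ioi r := by
    ext x
    simp only [mem_setOf_eq, lt_abs, mem_union, mem_Iio, mem_Ioi, lt_neg]
    tauto
  have hdisj : Disjoint (Iio (-r)) (Ioi r) := by
    rw [Set.disjoint_left]
    intro x hx hx'
    simp only [mem_Iio] at hx
    simp only [mem_Ioi] at hx'
    linarith
  set f : ℝ → ENNReal :=
    fun x => ENNReal.ofReal (1 / ((1 + |x|) * Real.log (1 + |x|) ^ (1 + α))) with hf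
  have key : ∫⁻ x in Ioi r, f x =
      ENNReal.ofReal (1 / (α * Real.log (1 + r) ^ α)) := by
    obtain ⟨hint, hval⟩ := tailIntegral α r hα hr
    have hcongr : ∫⁻ x in Ioi r, f x =
        ∫⁻ x in Ioi r, ENNReal.ofReal (1 / ((1 + x) * Real.log (1 + x) ^ (1 + α))) := by
      refine setLIntegral_congr_fun measurableSet_Ioi (fun x hx => ?_)
      have : |x| = x := abs_of_pos (lt_trans (lt_of_lt_of_le one_pos hr) hx)
      rw [hf]
      simp only [this]
    rw [hcongr, ← ofReal_integral_eq_lintegral_ofReal hint ?_, hval]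
    refine (ae_restrict_iff' measurableSet_Ioi).2 (ae_of_all _ fun x hx => ?_)
    have hx0 : (0:ℝ) < x := lt_trans (lt_of_lt_of_le one_pos hr) hx
    have hlog : 0 < Real.log (1 + x) := Real.log_pos (by linarith)
    positivity
  have hnegside : ∫⁻ x in Iio (-r), f x = ∫⁻ x in Ioi r, f x := by
    have hmp := (Measure.measurePreserving_neg (volume : Measure ℝ)).setLIntegral_comp_preimage_emb
      (MeasurableEquiv.neg ℝ).measurableEmbedding f (Ioi r)
    have hpre : (Neg.neg : ℝ → ℝ) ⁻¹' (Ioi r) = Iio (-r) := by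
      ext x; simp only [mem_preimage, mem_Ioi, mem_Iio, lt_neg]
    have heven : ∀ x : ℝ, f (-x) = f x := by
      intro x; rw [hf]; simp [abs_neg]
    rw [hpre] at hmp
    calc ∫⁻ x in Iio (-r), f x = ∫⁻ x in Iio (-r), f (-x) := by
          simp only [heven]
      _ = ∫⁻ x in Ioi r, f x := hmp
  have hmeas : nuAlpha' α {x : ℝ | r < |x|} =
      ENNReal.ofReal (2 / (α * Real.log (1 + r) ^ α)) := by
    rw [nuAlpha', Measure.restrict_apply hs, Set.inter_eq_self_of_subset_left hsub,
      nuAlpha, withDensity_apply _ hs, hsplit,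
      lintegral_union measurableSet_Ioi hdisj, hnegside, key, ← ENNReal.ofReal_add]
    · congr 1; ring
    · have hlogr : 0 < Real.log (1 + r) := Real.log_pos (by linarith)
      positivity
    · have hlogr : 0 < Real.log (1 + r) := Real.log_pos (by linarith)
      positivity
  rw [hmeas, ENNReal.toReal_ofReal]
  have hlogr : 0 < Real.log (1 + r) := Real.log_pos (by linarith)
  positivity

/-- For every `0 < α < 2` and every `r ≥ 1`, the Pruitt index function satisfies
`h̄(r) ≥ 2/(α·log^α(1+r))`. -/
theorem hbar_ge (α r : ℝ) (hα0 : 0 < α) (hα2 : α < 2) (hr : 1 ≤ r) :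
    hbar α r ≥ 2 / (α * Real.log (1 + r) ^ α) := by
  have h1 := tailMeasure α r hα0 hr
  have h2 : 0 ≤ (r ^ 2)⁻¹ * ∫ x in {x : ℝ | |x| ≤ r}, x ^ 2 ∂(nuAlpha' α) :=
    mul_nonneg (inv_nonneg.2 (sq_nonneg r)) (integral_nonneg fun x => sq_nonneg x)
  have h3 : 0 ≤ r⁻¹ * |∫ x in {x : ℝ | 1 < |x| ∧ |x| ≤ r}, x ∂(nuAlpha' α)| :=
    mul_nonneg (inv_nonneg.2 (by linarith)) (abs_nonneg _)
  unfold hbar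
  rw [h1]
  linarith
end

section
/- For every 0 < α < 2, with h̄(r) = ν'_α({x : |x| > r}) + r^{-2}·∫_{|x| ≤ r} x² dν'_α(x) + r^{-1}·|∫_{1 < |x| ≤ r} x dν'_α(x)|, one has limsup_{r → ∞} r^η·h̄(r) = ∞ for every η > 0; consequently the Pruitt index β̄ = sup{η ≥ 0 : limsup_{r → ∞} r^η·h̄(r) = 0} equals 0. -/
open MeasureTheory Filter
open scoped Topology

section Aux

variable {α : ℝ}

/-- The real density function. -/
noncomputable def nuDen (α x : ℝ) : ℝ := 1 / ((1 + |x|) * Real.log (1 + |x|) ^ (1 + α))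

lemma nuDen_meas (α : ℝ) :
    Measurable fun x : ℝ => ENNReal.ofReal (nuDen α x) := by
  apply Measurable.ennreal_ofReal
  unfold nuDen
  measurability

lemma integrableOn_Ioi_nuDen (hα0 : 0 < α) :
    IntegrableOn (fun x : ℝ => 1 / ((1 + x) * Real.log (1 + x) ^ (1 + α)))
      (Set.Ioi (1 : ℝ)) := by
  set G : ℝ → ℝ := fun x => 1 / ((1 + x) * Real.log (1 + x) ^ (1 + α)) with hG
  have hderiv : ∀ x ∈ Set.Ici (1 : ℝ),
      HasDerivAt (fun x => -α⁻¹ * Real.log (1 + x) ^ (-α)) (G x) x := by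
    intro x hx
    have hx1 : (1 : ℝ) ≤ x := hx
    have hx0 : (0 : ℝ) < 1 + x := by linarith
    have hL : 0 < Real.log (1 + x) := Real.log_pos (by linarith)
    have h₁ : HasDerivAt (fun x : ℝ => Real.log (1 + x)) ((1 + x)⁻¹ * 1) x :=
      (Real.hasDerivAt_log hx0.ne').comp x ((hasDerivAt_id x).const_add 1)
    have h₂ : HasDerivAt (fun y : ℝ => y ^ (-α))
        (-α * Real.log (1 + x) ^ (-α - 1)) (Real.log (1 + x)) :=
      Real.hasDerivAt_rpow_const (Or.inl hL.ne')
    have h₃ := (h₂.comp x h₁).const_mul (-α⁻¹)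
    refine h₃.congr_deriv ?_
    symm
    have he : Real.log (1 + x) ^ (-α - 1) = (Real.log (1 + x) ^ (1 + α))⁻¹ := by
      rw [show (-α - 1 : ℝ) = -(1 + α) by ring, Real.rpow_neg hL.le]
    rw [he, hG]
    have hP : (0 : ℝ) < Real.log (1 + x) ^ (1 + α) := Real.rpow_pos_of_pos hL _
    field_simp
  have hpos : ∀ x ∈ Set.Ioi (1 : ℝ), 0 ≤ G x := by
    intro x hx
    have hx1 : (1 : ℝ) < x := hx
    have hL : 0 < Real.log (1 + x) := Real.log_pos (by linarith)
    have := Real.rpow_pos_of_pos hL (1 + α)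
    exact le_of_lt (div_pos one_pos (mul_pos (by linarith) this))
  have htend : Tendsto (fun x : ℝ => -α⁻¹ * Real.log (1 + x) ^ (-α)) atTop
      (𝓝 (-α⁻¹ * 0)) := by
    apply Tendsto.const_mul
    exact (tendsto_rpow_neg_atTop hα0).comp
      (Real.tendsto_log_atTop.comp (tendsto_atTop_add_const_left _ 1 tendsto_id))
  exact integrableOn_Ioi_deriv_of_nonneg' hderiv hpos htend

lemma set_eq_union : {x : ℝ | 1 < |x|} = Set.Iio (-1 : ℝ) ∪ Set.Ioi (1 : ℝ) := by
  ext x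
  simp [lt_abs, Set.mem_Iio, Set.mem_Ioi, lt_neg, or_comm]

lemma integrableOn_nuDen (hα0 : 0 < α) :
    IntegrableOn (nuDen α) {x : ℝ | 1 < |x|} := by
  have hIoi : IntegrableOn (nuDen α) (Set.Ioi (1 : ℝ)) := by
    apply (integrableOn_Ioi_nuDen hα0).congr_fun _ measurableSet_Ioi
    intro x hx
    have : |x| = x := abs_of_pos (lt_trans one_pos hx)
    simp [nuDen, this]
  have hIio : IntegrableOn (nuDen α) (Set.Iio (-1 : ℝ)) := by
    have h := ((MeasurePreserving.integrableOn_comp_preimage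
      (Measure.measurePreserving_neg (volume : Measure ℝ))
      (Homeomorph.neg ℝ).measurableEmbedding).2 hIoi)
    have hpre : (Neg.neg ⁻¹' Set.Ioi (1 : ℝ) : Set ℝ) = Set.Iio (-1 : ℝ) := by
      ext x; simp [lt_neg]
    have hfun : (nuDen α ∘ (Neg.neg : ℝ → ℝ)) = nuDen α := by
      funext x; simp [nuDen, abs_neg]
    rwa [hpre, hfun] at h
  rw [set_eq_union]
  exact hIio.union hIoi

lemma nuAlpha'_univ_ne_top (hα0 : 0 < α) : nuAlpha' α Set.univ ≠ ⊤ := by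
  have hS : MeasurableSet {x : ℝ | 1 < |x|} :=
    measurableSet_lt measurable_const measurable_abs
  have h1 : nuAlpha' α Set.univ
      = ∫⁻ x in {x : ℝ | 1 < |x|}, ENNReal.ofReal (nuDen α x) ∂volume := by
    rw [nuAlpha', Measure.restrict_apply_univ, nuAlpha, withDensity_apply _ hS]
    rfl
  rw [h1]
  have hint := (integrableOn_nuDen (α := α) hα0).2
  have hle : ∫⁻ x in {x : ℝ | 1 < |x|}, ENNReal.ofReal (nuDen α x) ∂volume
      ≤ ∫⁻ x in {x : ℝ | 1 < |x|}, (‖nuDen α x‖₊ : ENNReal) ∂volume :=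
    lintegral_mono fun x => Real.ofReal_le_enorm _
  exact (lt_of_le_of_lt hle hint).ne

lemma nuAlpha'_tail_lower (hα0 : 0 < α) {r : ℝ} (hr : 1 ≤ r) :
    ENNReal.ofReal (1 / ((1 + 2 * r) * Real.log (1 + 2 * r) ^ (1 + α)))
      * ENNReal.ofReal r ≤ nuAlpha' α {x : ℝ | r < |x|} := by
  have hS : MeasurableSet {x : ℝ | 1 < |x|} :=
    measurableSet_lt measurable_const measurable_abs
  have hT : MeasurableSet {x : ℝ | r < |x|} :=
    measurableSet_lt measurable_const measurable_abs
  have hsub : Set.Ioc r (2 * r) ⊆ {x : ℝ | r < |x|} ∩ {x : ℝ | 1 < |x|} := by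
    intro x hx
    have hx1 : r < x := hx.1
    have hxa : |x| = x := abs_of_pos (by linarith)
    constructor
    · simpa [hxa] using hx1
    · simp only [Set.mem_setOf_eq, hxa]; linarith
  have h1 : nuAlpha' α {x : ℝ | r < |x|}
      = ∫⁻ x in {x : ℝ | r < |x|} ∩ {x : ℝ | 1 < |x|},
          ENNReal.ofReal (nuDen α x) ∂volume := by
    rw [nuAlpha', Measure.restrict_apply hT, nuAlpha,
      withDensity_apply _ (hT.inter hS)]
    rfl
  rw [h1]
  have h2 : ∫⁻ x in Set.Ioc r (2 * r), ENNReal.ofReal (nuDen α x) ∂volume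
      ≤ ∫⁻ x in {x : ℝ | r < |x|} ∩ {x : ℝ | 1 < |x|},
          ENNReal.ofReal (nuDen α x) ∂volume :=
    lintegral_mono_set hsub
  refine le_trans ?_ h2
  have h3 : ∀ x ∈ Set.Ioc r (2 * r),
      ENNReal.ofReal (1 / ((1 + 2 * r) * Real.log (1 + 2 * r) ^ (1 + α)))
        ≤ ENNReal.ofReal (nuDen α x) := by
    intro x hx
    apply ENNReal.ofReal_le_ofReal
    have hx1 : r < x := hx.1
    have hx2 : x ≤ 2 * r := hx.2
    have hxa : |x| = x := abs_of_pos (by linarith)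
    have hL : 0 < Real.log (1 + x) := Real.log_pos (by linarith)
    have hL2 : 0 < Real.log (1 + 2 * r) := Real.log_pos (by linarith)
    rw [nuDen, hxa]
    apply one_div_le_one_div_of_le
    · exact mul_pos (by linarith) (Real.rpow_pos_of_pos hL (1 + α))
    · apply mul_le_mul (by linarith)
        (Real.rpow_le_rpow hL.le (Real.log_le_log (by linarith) (by linarith))
          (by linarith)) (Real.rpow_nonneg hL.le _) (by linarith)
  calc ENNReal.ofReal (1 / ((1 + 2 * r) * Real.log (1 + 2 * r) ^ (1 + α)))
        * ENNReal.ofReal r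
      = ∫⁻ _ in Set.Ioc r (2 * r),
          ENNReal.ofReal (1 / ((1 + 2 * r) * Real.log (1 + 2 * r) ^ (1 + α)))
          ∂volume := by
        rw [setLIntegral_const, Real.volume_Ioc]
        congr 1
        congr 1
        ring
    _ ≤ _ := setLIntegral_mono (nuDen_meas α) h3

lemma hbar_lower (hα0 : 0 < α) {r : ℝ} (hr : 1 ≤ r) :
    (1 / 3) / Real.log (1 + 2 * r) ^ (1 + α) ≤ hbar α r := by
  have hr0 : (0 : ℝ) < r := lt_of_lt_of_le one_pos hr
  have hL2 : 0 < Real.log (1 + 2 * r) := Real.log_pos (by linarith)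
  have hP : 0 < Real.log (1 + 2 * r) ^ (1 + α) := Real.rpow_pos_of_pos hL2 _
  set c : ℝ := 1 / ((1 + 2 * r) * Real.log (1 + 2 * r) ^ (1 + α)) with hc
  have hc0 : 0 ≤ c := le_of_lt (div_pos one_pos (mul_pos (by linarith) hP))
  -- first term lower bound
  have hfin : nuAlpha' α {x : ℝ | r < |x|} ≠ ⊤ :=
    (lt_of_le_of_lt (measure_mono (Set.subset_univ _))
      (lt_of_le_of_ne le_top (nuAlpha'_univ_ne_top hα0))).ne
  have hl := nuAlpha'_tail_lower hα0 hr
  rw [← ENNReal.ofReal_mul hc0] at hl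
  have h1 : c * r ≤ (nuAlpha' α {x : ℝ | r < |x|}).toReal := by
    have := ENNReal.toReal_mono hfin hl
    rwa [ENNReal.toReal_ofReal (mul_nonneg hc0 hr0.le)] at this
  have h2 : (1 / 3) / Real.log (1 + 2 * r) ^ (1 + α) ≤ c * r := by
    rw [hc]
    rw [div_le_iff₀ hP] at *
    have key : (1 / 3 : ℝ) * (1 + 2 * r) ≤ r := by linarith
    field_simp
    nlinarith [hP.le, mul_le_mul_of_nonneg_right key hP.le]
  have h3 : 0 ≤ (r ^ 2)⁻¹ * ∫ x in {x : ℝ | |x| ≤ r}, x ^ 2 ∂(nuAlpha' α) := by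
    apply mul_nonneg (by positivity)
    exact integral_nonneg fun x => sq_nonneg x
  have h4 : 0 ≤ r⁻¹ * |∫ x in {x : ℝ | 1 < |x| ∧ |x| ≤ r}, x ∂(nuAlpha' α)| :=
    mul_nonneg (by positivity) (abs_nonneg _)
  unfold hbar
  linarith

end Aux

/-- For every `0 < α < 2`, one has `limsup_{r → ∞} r^η·h̄(r) = ∞` for every `η > 0`;
consequently the Pruitt index
`β̄ = sup {η ≥ 0 : limsup_{r → ∞} r^η·h̄(r) = 0}` equals `0`. -/
theorem pruitt_index_eq_zero (α : ℝ) (hα0 : 0 < α) (hα2 : α < 2) :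
    (∀ η : ℝ, 0 < η →
      limsup (fun r : ℝ => ENNReal.ofReal (r ^ η * hbar α r)) atTop = ⊤) ∧
    sSup {η : ℝ | 0 ≤ η ∧
      limsup (fun r : ℝ => ENNReal.ofReal (r ^ η * hbar α r)) atTop = 0} = 0 := by
  have main : ∀ η : ℝ, 0 < η →
      limsup (fun r : ℝ => ENNReal.ofReal (r ^ η * hbar α r)) atTop = ⊤ := by
    intro η hη
    -- the lower bound function tends to infinity
    have ht12 : Tendsto (fun r : ℝ => 1 + 2 * r) atTop atTop :=
      tendsto_atTop_add_const_left _ 1 (tendsto_id.const_mul_atTop two_pos)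
    have hlo : (fun r : ℝ => Real.log (1 + 2 * r) ^ (1 + α))
        =o[atTop] fun r : ℝ => r ^ η := by
      have step1 := (isLittleO_log_rpow_rpow_atTop (1 + α)
        (show (0:ℝ) < η / 2 by positivity)).comp_tendsto ht12
      refine step1.trans_isBigO (Asymptotics.IsBigO.of_bound ((3 : ℝ) ^ (η / 2)) ?_)
      filter_upwards [eventually_ge_atTop (1 : ℝ)] with r hr
      have hr0 : (0 : ℝ) < r := lt_of_lt_of_le one_pos hr
      have h1 : (1 + 2 * r : ℝ) ^ (η / 2) ≤ (3 * r) ^ (η / 2) :=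
        Real.rpow_le_rpow (by linarith) (by linarith) (by positivity)
      have h2 : ((3 : ℝ) * r) ^ (η / 2) = 3 ^ (η / 2) * r ^ (η / 2) :=
        Real.mul_rpow (by norm_num) hr0.le
      have h3 : r ^ (η / 2) ≤ r ^ η :=
        Real.rpow_le_rpow_of_exponent_le hr (by linarith)
      simp only [Function.comp, Real.norm_eq_abs,
        abs_of_nonneg (Real.rpow_nonneg (by linarith : (0:ℝ) ≤ 1 + 2 * r) _),
        abs_of_nonneg (Real.rpow_nonneg hr0.le _)]
      calc (1 + 2 * r : ℝ) ^ (η / 2) ≤ 3 ^ (η / 2) * r ^ (η / 2) := by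
            rw [← h2]; exact h1
        _ ≤ 3 ^ (η / 2) * r ^ η := by
            apply mul_le_mul_of_nonneg_left h3 (by positivity)
    have hdiv : Tendsto
        (fun r : ℝ => r ^ η / Real.log (1 + 2 * r) ^ (1 + α)) atTop atTop := by
      have h0 := hlo.tendsto_div_nhds_zero
      have hev : ∀ᶠ r : ℝ in atTop,
          Real.log (1 + 2 * r) ^ (1 + α) / r ^ η ∈ Set.Ioi (0 : ℝ) := by
        filter_upwards [eventually_ge_atTop (1 : ℝ)] with r hr
        have hr0 : (0 : ℝ) < r := lt_of_lt_of_le one_pos hr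
        have hL : 0 < Real.log (1 + 2 * r) := Real.log_pos (by linarith)
        exact div_pos (Real.rpow_pos_of_pos hL _) (Real.rpow_pos_of_pos hr0 _)
      have := (tendsto_nhdsWithin_iff.2 ⟨h0, hev⟩).inv_tendsto_nhdsGT_zero
      simpa [Pi.inv_def, inv_div] using this
    have hT : Tendsto (fun r : ℝ => r ^ η * hbar α r) atTop atTop := by
      apply tendsto_atTop_mono' atTop _
        ((hdiv.const_mul_atTop (show (0:ℝ) < 1/3 by norm_num)))
      filter_upwards [eventually_ge_atTop (1 : ℝ)] with r hr
      have hr0 : (0 : ℝ) < r := lt_of_lt_of_le one_pos hr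
      have hb := hbar_lower hα0 hr
      have hrp : 0 ≤ r ^ η := Real.rpow_nonneg hr0.le _
      calc (1/3 : ℝ) * (r ^ η / Real.log (1 + 2 * r) ^ (1 + α))
          = r ^ η * ((1/3) / Real.log (1 + 2 * r) ^ (1 + α)) := by ring
        _ ≤ r ^ η * hbar α r := mul_le_mul_of_nonneg_left hb hrp
    have : Tendsto (fun r : ℝ => ENNReal.ofReal (r ^ η * hbar α r)) atTop (𝓝 ⊤) :=
      ENNReal.tendsto_ofReal_atTop.comp hT
    exact this.limsup_eq
  refine ⟨main, ?_⟩
  have hsub : {η : ℝ | 0 ≤ η ∧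
      limsup (fun r : ℝ => ENNReal.ofReal (r ^ η * hbar α r)) atTop = 0}
      ⊆ {(0 : ℝ)} := by
    rintro η ⟨h0, hls⟩
    rcases eq_or_lt_of_le h0 with h | h
    · simp [← h]
    · exact absurd (hls.symm.trans (main η h)) (by simp)
  rcases Set.subset_singleton_iff_eq.1 hsub with h | h
  · rw [h]; exact Real.sSup_empty
  · rw [h]; exact csSup_singleton 0
end
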